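/- Let Y_R, Y_S, Y3, X1, X2, X3 be finite discrete random variables with conditional distribution p(y_R, y_S, y3 | x1, x2, x3) = p(y_R | x3) p(y_S, y3 | x1, x2) (semi-orthogonal MARC), and let S1, V2 be additional random variables such that (S1, V2, X1, X2) ↔ X3 ↔ Y_R is a Markov chain and Y_S is a deterministic function of (X1, X2). Then I(X1, X3; (Y_R, Y_S) | S1, V2, X2) ≤ I(X1; Y_S | S1, V2, X2) + I(X3; Y_R). -/

import Mathlib

open scoped BigOperators

set_option synthInstance.maxSize 8192

noncomputable section

/-- Probability that the random variable `X` equals `x`, under pmf `p` on finite `Ω`. -/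
def prEq {Ω α : Type*} [Fintype Ω] [DecidableEq α] (p : Ω → ℝ) (X : Ω → α) (x : α) : ℝ :=
  ∑ ω : Ω, if X ω = x then p ω else 0

/-- Shannon entropy (base 2) of a discrete random variable. -/
def entH {Ω α : Type*} [Fintype Ω] [Fintype α] [DecidableEq α] (p : Ω → ℝ) (X : Ω → α) : ℝ :=
  -∑ x : α, prEq p X x * Real.logb 2 (prEq p X x)

/-- Conditional entropy `H(X | Y)`. -/
def condH {Ω α β : Type*} [Fintype Ω] [Fintype α] [DecidableEq α] [Fintype β] [DecidableEq β]
    (p : Ω → ℝ) (X : Ω → α) (Y : Ω → β) : ℝ :=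
  entH p (fun ω => (X ω, Y ω)) - entH p Y

/-- Conditional mutual information `I(X ; Y | Z)`. -/
def condMI {Ω α β γ : Type*} [Fintype Ω] [Fintype α] [DecidableEq α] [Fintype β] [DecidableEq β]
    [Fintype γ] [DecidableEq γ] (p : Ω → ℝ) (X : Ω → α) (Y : Ω → β) (Z : Ω → γ) : ℝ :=
  condH p X Z + condH p Y Z - condH p (fun ω => (X ω, Y ω)) Z

/-- (Unconditional) mutual information `I(X ; Y)`. -/
def mi2 {Ω α β : Type*} [Fintype Ω] [Fintype α] [DecidableEq α] [Fintype β] [DecidableEq β]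
    (p : Ω → ℝ) (X : Ω → α) (Y : Ω → β) : ℝ :=
  entH p X + entH p Y - entH p (fun ω => (X ω, Y ω))

/-- `p` is a probability mass function on `Ω`. -/
def IsPMF {Ω : Type*} [Fintype Ω] (p : Ω → ℝ) : Prop :=
  (∀ ω, 0 ≤ p ω) ∧ ∑ ω : Ω, p ω = 1

/-- The Markov chain `A ↔ B ↔ C`: `A` and `C` are conditionally independent given `B`. -/
def MarkovChain {Ω α β γ : Type*} [Fintype Ω] [DecidableEq α] [DecidableEq β] [DecidableEq γ]
    (p : Ω → ℝ) (A : Ω → α) (B : Ω → β) (C : Ω → γ) : Prop :=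
  ∀ a b c, prEq p (fun ω => (A ω, B ω, C ω)) (a, b, c) * prEq p B b
    = prEq p (fun ω => (A ω, B ω)) (a, b) * prEq p (fun ω => (B ω, C ω)) (b, c)

/-- Hirschfeld–Gebelein–Rényi maximal correlation of `X` and `Y`
(with the convention `sSup ∅ = 0` in `ℝ`). -/
def maxCorr {Ω α β : Type*} [Fintype Ω] (p : Ω → ℝ) (X : Ω → α) (Y : Ω → β) : ℝ :=
  sSup {r : ℝ | ∃ f : α → ℝ, ∃ g : β → ℝ,
    (∑ ω : Ω, p ω * f (X ω)) = 0 ∧ (∑ ω : Ω, p ω * g (Y ω)) = 0 ∧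
    (∑ ω : Ω, p ω * (f (X ω)) ^ 2) = 1 ∧ (∑ ω : Ω, p ω * (g (Y ω)) ^ 2) = 1 ∧
    r = ∑ ω : Ω, p ω * f (X ω) * g (Y ω)}

section Basics
variable {Ω α β γ : Type*} [Fintype Ω] {p : Ω → ℝ}

lemma prEq_nonneg [DecidableEq α] (hp : ∀ ω, 0 ≤ p ω) (X : Ω → α) (x : α) :
    0 ≤ prEq p X x :=
  Finset.sum_nonneg fun ω _ => by by_cases h : X ω = x <;> simp [h, hp ω]

lemma prEq_congr [DecidableEq α] [DecidableEq β] {X : Ω → α} {Y : Ω → β} {x : α} {y : β}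
    (h : ∀ ω, X ω = x ↔ Y ω = y) : prEq p X x = prEq p Y y :=
  Finset.sum_congr rfl fun ω _ => by rw [if_congr (h ω) rfl rfl]

lemma prEq_mono [DecidableEq α] [DecidableEq β] (hp : ∀ ω, 0 ≤ p ω)
    {X : Ω → α} {Y : Ω → β} {x : α} {y : β}
    (h : ∀ ω, X ω = x → Y ω = y) : prEq p X x ≤ prEq p Y y := by
  refine Finset.sum_le_sum fun ω _ => ?_
  by_cases hx : X ω = x
  · simp [hx, h ω hx]
  · simp only [if_neg hx]
    split <;> [exact hp ω; exact le_refl 0]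

lemma sum_prEq [Fintype α] [DecidableEq α] (X : Ω → α) : ∑ x, prEq p X x = ∑ ω, p ω := by
  unfold prEq
  rw [Finset.sum_comm]
  exact Finset.sum_congr rfl fun ω _ => by simp

lemma prEq_marginal_right [DecidableEq α] [Fintype β] [DecidableEq β] (X : Ω → α) (Y : Ω → β) (x : α) :
    ∑ y, prEq p (fun ω => (X ω, Y ω)) (x, y) = prEq p X x := by
  unfold prEq
  rw [Finset.sum_comm]
  refine Finset.sum_congr rfl fun ω _ => ?_
  by_cases h : X ω = x <;> simp [Prod.ext_iff, h]

lemma prEq_marginal_left [Fintype α] [DecidableEq α] [DecidableEq β] (X : Ω → α) (Y : Ω → β) (y : β) :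
    ∑ x, prEq p (fun ω => (X ω, Y ω)) (x, y) = prEq p Y y := by
  unfold prEq
  rw [Finset.sum_comm]
  refine Finset.sum_congr rfl fun ω _ => ?_
  by_cases h : Y ω = y <;> simp [Prod.ext_iff, h]

lemma entH_comp [Fintype α] [DecidableEq α] [Fintype β] [DecidableEq β]
    {e : α → β} (he : Function.Injective e) (X : Ω → α) :
    entH p (fun ω => e (X ω)) = entH p X := by
  unfold entH
  congr 1
  have h0 : ∀ b ∈ Finset.univ, b ∉ Finset.univ.image e →
      prEq p (fun ω => e (X ω)) b * Real.logb 2 (prEq p (fun ω => e (X ω)) b) = 0 := by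
    intro b _ hb
    have : prEq p (fun ω => e (X ω)) b = 0 := by
      refine Finset.sum_eq_zero fun ω _ => ?_
      rw [if_neg]
      intro h
      exact hb (Finset.mem_image.2 ⟨X ω, Finset.mem_univ _, h⟩)
    simp [this]
  rw [← Finset.sum_subset (Finset.subset_univ _) h0,
    Finset.sum_image (fun a _ b _ h => he h)]
  refine Finset.sum_congr rfl fun x _ => ?_
  have : prEq p (fun ω => e (X ω)) (e x) = prEq p X x :=
    prEq_congr fun ω => ⟨fun h => he h, fun h => by rw [h]⟩
  rw [this]

lemma entH_comp' [Fintype α] [DecidableEq α] [Fintype β] [DecidableEq β]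
    {e : α → β} (he : Function.Injective e) (X : Ω → α) (G : Ω → β)
    (hG : ∀ ω, G ω = e (X ω)) : entH p G = entH p X := by
  rw [show G = fun ω => e (X ω) from funext hG]
  exact entH_comp he X

lemma entH_eq_log (X : Ω → α) [Fintype α] [DecidableEq α] :
    entH p X = (-∑ x, prEq p X x * Real.log (prEq p X x)) / Real.log 2 := by
  unfold entH Real.logb
  rw [neg_div, Finset.sum_div]
  congr 1
  exact Finset.sum_congr rfl fun x _ => by ring

lemma sum_prEq_mul [Fintype α] [DecidableEq α] (X : Ω → α) (g : α → ℝ) :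
    ∑ x, prEq p X x * g x = ∑ ω, p ω * g (X ω) := by
  unfold prEq
  have : ∀ x, (∑ ω : Ω, if X ω = x then p ω else 0) * g x
      = ∑ ω : Ω, if X ω = x then p ω * g x else 0 := by
    intro x
    rw [Finset.sum_mul]
    exact Finset.sum_congr rfl fun ω _ => by split <;> simp
  simp_rw [this]
  rw [Finset.sum_comm]
  refine Finset.sum_congr rfl fun ω _ => ?_
  simp

lemma prEq_apply_le [Fintype α] [DecidableEq α] (hp : ∀ ω, 0 ≤ p ω) (X : Ω → α) (ω : Ω) :
    p ω ≤ prEq p X (X ω) := by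
  have h := Finset.single_le_sum (f := fun ω' : Ω => if X ω' = X ω then p ω' else 0)
    (fun i _ => by by_cases h : X i = X ω <;> simp [h, hp i]) (Finset.mem_univ ω)
  unfold prEq
  simpa using h

lemma entH_eq_omega_sum [Fintype α] [DecidableEq α] (X : Ω → α) :
    entH p X = (-∑ ω, p ω * Real.log (prEq p X (X ω))) / Real.log 2 := by
  rw [entH_eq_log, sum_prEq_mul X (fun x => Real.log (prEq p X x))]

end Basics

lemma gibbs {ι : Type*} [Fintype ι] (a b : ι → ℝ) (ha : ∀ i, 0 ≤ a i) (hb : ∀ i, 0 ≤ b i)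
    (hab : ∀ i, b i = 0 → a i = 0) (ha1 : ∑ i, a i = 1) (hb1 : ∑ i, b i ≤ 1) :
    0 ≤ ∑ i, a i * Real.log (a i / b i) := by
  have key : ∀ i, a i - b i ≤ a i * Real.log (a i / b i) := by
    intro i
    rcases eq_or_lt_of_le (ha i) with h0 | hpos
    · simp [← h0]
      linarith [hb i]
    · have hbpos : 0 < b i := by
        rcases eq_or_lt_of_le (hb i) with h0' | h'
        · exact absurd (hab i h0'.symm) (by linarith)
        · exact h'
      have hlog : Real.log (b i / a i) ≤ b i / a i - 1 :=
        Real.log_le_sub_one_of_pos (by positivity)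
      have : Real.log (a i / b i) = -Real.log (b i / a i) := by
        rw [← Real.log_inv]
        congr 1
        field_simp
      rw [this]
      have := mul_le_mul_of_nonneg_left hlog (le_of_lt hpos)
      have h2 : a i * (b i / a i - 1) = b i - a i := by field_simp
      nlinarith
  calc (0:ℝ) ≤ ∑ i, (a i - b i) := by rw [Finset.sum_sub_distrib, ha1]; linarith
    _ ≤ _ := Finset.sum_le_sum fun i _ => key i

section CMI
variable {Ω α β γ : Type*} [Fintype Ω] [Fintype α] [DecidableEq α] [Fintype β] [DecidableEq β]
  [Fintype γ] [DecidableEq γ] {p : Ω → ℝ}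

lemma condMI_eq_sum (hp : ∀ ω, 0 ≤ p ω) (X : Ω → α) (Y : Ω → β) (Z : Ω → γ) :
    condMI p X Y Z = (∑ q : (α × β) × γ,
      prEq p (fun ω => ((X ω, Y ω), Z ω)) q *
        Real.log (prEq p (fun ω => ((X ω, Y ω), Z ω)) q * prEq p Z q.2 /
          (prEq p (fun ω => (X ω, Z ω)) (q.1.1, q.2) *
            prEq p (fun ω => (Y ω, Z ω)) (q.1.2, q.2)))) / Real.log 2 := by
  have hXZ := entH_eq_omega_sum (p := p) (fun ω => (X ω, Z ω))
  have hYZ := entH_eq_omega_sum (p := p) (fun ω => (Y ω, Z ω))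
  have hXYZ := entH_eq_omega_sum (p := p) (fun ω => ((X ω, Y ω), Z ω))
  have hZ := entH_eq_omega_sum (p := p) Z
  have hR : (∑ q : (α × β) × γ,
      prEq p (fun ω => ((X ω, Y ω), Z ω)) q *
        Real.log (prEq p (fun ω => ((X ω, Y ω), Z ω)) q * prEq p Z q.2 /
          (prEq p (fun ω => (X ω, Z ω)) (q.1.1, q.2) *
            prEq p (fun ω => (Y ω, Z ω)) (q.1.2, q.2))))
      = ∑ ω, p ω * Real.log
          (prEq p (fun ω => ((X ω, Y ω), Z ω)) ((X ω, Y ω), Z ω) * prEq p Z (Z ω) /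
          (prEq p (fun ω => (X ω, Z ω)) (X ω, Z ω) *
            prEq p (fun ω => (Y ω, Z ω)) (Y ω, Z ω))) := by
    exact sum_prEq_mul (fun ω => ((X ω, Y ω), Z ω)) (fun q =>
      Real.log (prEq p (fun ω => ((X ω, Y ω), Z ω)) q * prEq p Z q.2 /
        (prEq p (fun ω => (X ω, Z ω)) (q.1.1, q.2) *
          prEq p (fun ω => (Y ω, Z ω)) (q.1.2, q.2))))
  have hpoint : ∑ ω, (p ω * Real.log (prEq p (fun ω => ((X ω, Y ω), Z ω)) ((X ω, Y ω), Z ω))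
        + p ω * Real.log (prEq p Z (Z ω))
        - p ω * Real.log (prEq p (fun ω => (X ω, Z ω)) (X ω, Z ω))
        - p ω * Real.log (prEq p (fun ω => (Y ω, Z ω)) (Y ω, Z ω)))
      = ∑ ω, p ω * Real.log
          (prEq p (fun ω => ((X ω, Y ω), Z ω)) ((X ω, Y ω), Z ω) * prEq p Z (Z ω) /
          (prEq p (fun ω => (X ω, Z ω)) (X ω, Z ω) *
            prEq p (fun ω => (Y ω, Z ω)) (Y ω, Z ω))) := by
    refine Finset.sum_congr rfl fun ω _ => ?_
    rcases eq_or_lt_of_le (hp ω) with h0 | hpos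
    · simp [← h0]
    · have h1 : 0 < prEq p (fun ω => ((X ω, Y ω), Z ω)) ((X ω, Y ω), Z ω) :=
        lt_of_lt_of_le hpos (prEq_apply_le hp _ ω)
      have h2 : 0 < prEq p Z (Z ω) := lt_of_lt_of_le hpos (prEq_apply_le hp _ ω)
      have h3 : 0 < prEq p (fun ω => (X ω, Z ω)) (X ω, Z ω) :=
        lt_of_lt_of_le hpos (prEq_apply_le hp _ ω)
      have h4 : 0 < prEq p (fun ω => (Y ω, Z ω)) (Y ω, Z ω) :=
        lt_of_lt_of_le hpos (prEq_apply_le hp _ ω)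
      rw [Real.log_div (by positivity) (by positivity), Real.log_mul (ne_of_gt h1) (ne_of_gt h2),
        Real.log_mul (ne_of_gt h3) (ne_of_gt h4)]
      ring
  have hsplit : ∑ ω, (p ω * Real.log (prEq p (fun ω => ((X ω, Y ω), Z ω)) ((X ω, Y ω), Z ω))
        + p ω * Real.log (prEq p Z (Z ω))
        - p ω * Real.log (prEq p (fun ω => (X ω, Z ω)) (X ω, Z ω))
        - p ω * Real.log (prEq p (fun ω => (Y ω, Z ω)) (Y ω, Z ω)))
      = (∑ ω, p ω * Real.log (prEq p (fun ω => ((X ω, Y ω), Z ω)) ((X ω, Y ω), Z ω)))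
        + (∑ ω, p ω * Real.log (prEq p Z (Z ω)))
        - (∑ ω, p ω * Real.log (prEq p (fun ω => (X ω, Z ω)) (X ω, Z ω)))
        - (∑ ω, p ω * Real.log (prEq p (fun ω => (Y ω, Z ω)) (Y ω, Z ω))) := by
    rw [Finset.sum_sub_distrib, Finset.sum_sub_distrib, Finset.sum_add_distrib]
  unfold condMI condH
  rw [hXZ, hYZ, hXYZ, hZ, hR]
  have hring : ∀ (a b c d s L : ℝ), c + d - a - b = s →
      (-a) / L - (-d) / L + ((-b) / L - (-d) / L) - ((-c) / L - (-d) / L) = s / L := by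
    intro a b c d s L h
    rw [← h]
    ring
  exact hring _ _ _ _ _ _ (hsplit ▸ hpoint)

lemma condMI_nonneg (hp : IsPMF p) (X : Ω → α) (Y : Ω → β) (Z : Ω → γ) :
    0 ≤ condMI p X Y Z := by
  obtain ⟨hp0, hp1⟩ := hp
  rw [condMI_eq_sum hp0]
  refine div_nonneg ?_ (Real.log_nonneg one_le_two)
  set T := prEq p (fun ω => ((X ω, Y ω), Z ω)) with hT
  set b : (α × β) × γ → ℝ := fun q =>
    if prEq p Z q.2 = 0 then 0 else
      prEq p (fun ω => (X ω, Z ω)) (q.1.1, q.2) * prEq p (fun ω => (Y ω, Z ω)) (q.1.2, q.2) /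
        prEq p Z q.2 with hb
  have hTu : ∀ q : (α × β) × γ, T q ≤ prEq p Z q.2 :=
    fun q => prEq_mono hp0 fun ω hh => congrArg Prod.snd hh
  have hTv : ∀ q : (α × β) × γ, T q ≤ prEq p (fun ω => (X ω, Z ω)) (q.1.1, q.2) :=
    fun q => prEq_mono hp0 fun ω hh => by rw [← hh]
  have hTw : ∀ q : (α × β) × γ, T q ≤ prEq p (fun ω => (Y ω, Z ω)) (q.1.2, q.2) :=
    fun q => prEq_mono hp0 fun ω hh => by rw [← hh]
  have hTnn : ∀ q, 0 ≤ T q := fun q => prEq_nonneg hp0 _ _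
  have hbnn : ∀ q, 0 ≤ b q := by
    intro q
    simp only [hb]
    split
    · exact le_refl 0
    · exact div_nonneg (mul_nonneg (prEq_nonneg hp0 _ _) (prEq_nonneg hp0 _ _))
        (prEq_nonneg hp0 _ _)
  have hab : ∀ q, b q = 0 → T q = 0 := by
    intro q h
    simp only [hb] at h
    split at h
    · next hz => exact le_antisymm (hz ▸ hTu q) (hTnn q)
    · next hz =>
      rcases div_eq_zero_iff.1 h with h' | h'
      · rcases mul_eq_zero.1 h' with h'' | h''
        · exact le_antisymm (h'' ▸ hTv q) (hTnn q)
        · exact le_antisymm (h'' ▸ hTw q) (hTnn q)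
      · exact absurd h' hz
  have ha1 : ∑ q, T q = 1 := by rw [hT, sum_prEq, hp1]
  have hb1 : ∑ q, b q ≤ 1 := by
    have : ∀ z : γ, ∑ xy : α × β, b (xy, z) ≤ prEq p Z z := by
      intro z
      by_cases hz : prEq p Z z = 0
      · simp only [hb, hz, if_pos]
        simp [prEq_nonneg hp0 Z z, hz]
      · have huz : 0 < prEq p Z z := lt_of_le_of_ne (prEq_nonneg hp0 Z z) (Ne.symm hz)
        have : ∑ xy : α × β, b (xy, z)
            = (∑ x, prEq p (fun ω => (X ω, Z ω)) (x, z))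
              * (∑ y, prEq p (fun ω => (Y ω, Z ω)) (y, z)) / prEq p Z z := by
          rw [Finset.sum_mul_sum, Finset.sum_div, Fintype.sum_prod_type]
          refine Finset.sum_congr rfl fun x _ => ?_
          rw [Finset.sum_div]
          refine Finset.sum_congr rfl fun y _ => ?_
          simp only [hb, hz, if_neg, ite_false]
        rw [this, prEq_marginal_left, prEq_marginal_left]
        rw [div_le_iff₀ huz]
    calc ∑ q : (α × β) × γ, b q = ∑ xy : α × β, ∑ z, b (xy, z) := by
          rw [Fintype.sum_prod_type]
      _ = ∑ z, ∑ xy : α × β, b (xy, z) := Finset.sum_comm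
      _ ≤ ∑ z, prEq p Z z := Finset.sum_le_sum fun z _ => this z
      _ = 1 := by rw [sum_prEq, hp1]
  have key := gibbs T b hTnn hbnn hab ha1 hb1
  refine le_trans key (le_of_eq (Finset.sum_congr rfl fun q _ => ?_))
  rcases eq_or_lt_of_le (hTnn q) with h0 | hpos
  · rw [← h0]; ring
  · have hu : 0 < prEq p Z q.2 := lt_of_lt_of_le hpos (hTu q)
    have hv : 0 < prEq p (fun ω => (X ω, Z ω)) (q.1.1, q.2) := lt_of_lt_of_le hpos (hTv q)
    have hw : 0 < prEq p (fun ω => (Y ω, Z ω)) (q.1.2, q.2) := lt_of_lt_of_le hpos (hTw q)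
    have : b q = prEq p (fun ω => (X ω, Z ω)) (q.1.1, q.2)
        * prEq p (fun ω => (Y ω, Z ω)) (q.1.2, q.2) / prEq p Z q.2 := by
      simp only [hb, if_neg (ne_of_gt hu)]
    rw [this, div_div_eq_mul_div]

lemma markov_condMI (hp : ∀ ω, 0 ≤ p ω) {A : Ω → α} {C : Ω → β} {B : Ω → γ}
    (h : MarkovChain p A B C) : condMI p A C B = 0 := by
  rw [condMI_eq_sum hp]
  rw [Finset.sum_eq_zero, zero_div]
  rintro ⟨⟨a, c⟩, b⟩ -
  dsimp only
  set T := prEq p (fun ω => ((A ω, C ω), B ω)) ((a, c), b) with hTdef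
  rcases eq_or_lt_of_le (prEq_nonneg hp (fun ω => ((A ω, C ω), B ω)) ((a, c), b))
    with h0 | hpos
  · rw [show T = 0 from h0.symm]; ring
  · have hTu : T ≤ prEq p B b := prEq_mono hp fun ω hh => congrArg Prod.snd hh
    have hTv : T ≤ prEq p (fun ω => (A ω, B ω)) (a, b) := by
      refine prEq_mono hp fun ω hh => ?_
      simp only [Prod.ext_iff] at hh ⊢
      tauto
    have hTw : T ≤ prEq p (fun ω => (C ω, B ω)) (c, b) := by
      refine prEq_mono hp fun ω hh => ?_
      simp only [Prod.ext_iff] at hh ⊢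
      tauto
    have hrec : T = prEq p (fun ω => (A ω, B ω, C ω)) (a, b, c) := by
      refine prEq_congr fun ω => ?_
      simp only [Prod.ext_iff]
      tauto
    have hwrec : prEq p (fun ω => (C ω, B ω)) (c, b) = prEq p (fun ω => (B ω, C ω)) (b, c) := by
      refine prEq_congr fun ω => ?_
      simp only [Prod.ext_iff]
      tauto
    have hmk : T * prEq p B b
        = prEq p (fun ω => (A ω, B ω)) (a, b) * prEq p (fun ω => (C ω, B ω)) (c, b) := by
      rw [hrec, hwrec]
      exact h a b c
    have harg : T * prEq p B b /
        (prEq p (fun ω => (A ω, B ω)) (a, b) * prEq p (fun ω => (C ω, B ω)) (c, b)) = 1 := by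
      rw [hmk]
      exact div_self (ne_of_gt (mul_pos (lt_of_lt_of_le hpos hTv) (lt_of_lt_of_le hpos hTw)))
    rw [harg, Real.log_one, mul_zero]

end CMI

section Struct
variable {Ω α β γ δ : Type*} [Fintype Ω] [Fintype α] [DecidableEq α] [Fintype β] [DecidableEq β]
  [Fintype γ] [DecidableEq γ] [Fintype δ] [DecidableEq δ] {p : Ω → ℝ}

lemma condMI_symm (X : Ω → α) (Y : Ω → β) (Z : Ω → γ) :
    condMI p X Y Z = condMI p Y X Z := by
  simp only [condMI, condH]
  have e1 : entH p (fun ω => ((X ω, Y ω), Z ω)) = entH p (fun ω => ((Y ω, X ω), Z ω)) :=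
    entH_comp' (p := p) (e := fun q : (β × α) × γ => ((q.1.2, q.1.1), q.2))
      (fun a b h => by simp only [Prod.ext_iff] at h ⊢; tauto) _ _ (fun ω => rfl)
  rw [e1]
  ring

lemma condMI_chain {α' : Type*} [Fintype α'] [DecidableEq α']
    (A : Ω → α) (A' : Ω → α') (C : Ω → β) (B : Ω → γ) :
    condMI p (fun ω => (A ω, A' ω)) C B
      = condMI p A' C B + condMI p A C (fun ω => (A' ω, B ω)) := by
  simp only [condMI, condH]
  have e1 : entH p (fun ω => (A ω, (A' ω, B ω))) = entH p (fun ω => ((A ω, A' ω), B ω)) :=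
    entH_comp' (p := p) (e := fun q : (α × α') × γ => (q.1.1, (q.1.2, q.2)))
      (fun a b h => by simp only [Prod.ext_iff] at h ⊢; tauto) _ _ (fun ω => rfl)
  have e2 : entH p (fun ω => (C ω, (A' ω, B ω))) = entH p (fun ω => ((A' ω, C ω), B ω)) :=
    entH_comp' (p := p) (e := fun q : (α' × β) × γ => (q.1.2, (q.1.1, q.2)))
      (fun a b h => by simp only [Prod.ext_iff] at h ⊢; tauto) _ _ (fun ω => rfl)
  have e3 : entH p (fun ω => ((A ω, C ω), (A' ω, B ω)))
      = entH p (fun ω => (((A ω, A' ω), C ω), B ω)) :=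
    entH_comp' (p := p) (e := fun q : ((α × α') × β) × γ => ((q.1.1.1, q.1.2), (q.1.1.2, q.2)))
      (fun a b h => by simp only [Prod.ext_iff] at h ⊢; tauto) _ _ (fun ω => rfl)
  rw [e1, e2, e3]
  ring

lemma condMI_eq_condH_sub (A : Ω → α) (C : Ω → β) (B : Ω → γ) :
    condMI p A C B = condH p C B - condH p C (fun ω => (A ω, B ω)) := by
  simp only [condMI, condH]
  have e1 : entH p (fun ω => (C ω, (A ω, B ω))) = entH p (fun ω => ((A ω, C ω), B ω)) :=
    entH_comp' (p := p) (e := fun q : (α × β) × γ => (q.1.2, (q.1.1, q.2)))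
      (fun a b h => by simp only [Prod.ext_iff] at h ⊢; tauto) _ _ (fun ω => rfl)
  rw [e1]
  ring

lemma condH_nonneg (hp : IsPMF p) (X : Ω → α) (Y : Ω → β) : 0 ≤ condH p X Y := by
  have h := condMI_nonneg hp X X Y
  have e1 : entH p (fun ω => ((X ω, X ω), Y ω)) = entH p (fun ω => (X ω, Y ω)) :=
    entH_comp' (p := p) (e := fun q : α × β => ((q.1, q.1), q.2))
      (fun a b h => by simp only [Prod.ext_iff] at h ⊢; tauto) _ _ (fun ω => rfl)
  simp only [condMI, condH, e1] at h
  simp only [condH]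
  linarith

lemma condH_le_coarser (hp : IsPMF p) (Y : Ω → α) (Z : Ω → γ) (φ : γ → δ) :
    condH p Y Z ≤ condH p Y (fun ω => φ (Z ω)) := by
  have h := condMI_nonneg hp Y Z (fun ω => φ (Z ω))
  have e1 : entH p (fun ω => (Z ω, φ (Z ω))) = entH p Z :=
    entH_comp' (p := p) (e := fun z => (z, φ z)) (fun a b h => congrArg Prod.fst h) Z _ (fun ω => rfl)
  have e2 : entH p (fun ω => ((Y ω, Z ω), φ (Z ω))) = entH p (fun ω => (Y ω, Z ω)) :=
    entH_comp' (p := p) (e := fun q : α × γ => (q, φ q.2))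
      (fun a b h => congrArg Prod.fst h) _ _ (fun ω => rfl)
  simp only [condMI, condH, e1, e2] at h
  simp only [condH]
  linarith

lemma condH_eq_zero_of_det (hp : IsPMF p) {Y : Ω → α} {A : Ω → β} {Z : Ω → γ}
    (h0 : condH p Y A = 0) (φ : γ → β) (hφ : ∀ ω, A ω = φ (Z ω)) :
    condH p Y Z = 0 := by
  have hA : (fun ω => φ (Z ω)) = A := funext fun ω => (hφ ω).symm
  have h1 : condH p Y Z ≤ condH p Y A := by
    have := condH_le_coarser hp Y Z φ
    rwa [hA] at this
  exact le_antisymm (by linarith) (condH_nonneg hp Y Z)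

lemma entH_unit (hp : IsPMF p) : entH p (fun _ : Ω => ()) = 0 := by
  have h1 : prEq p (fun _ : Ω => ()) () = 1 := by
    unfold prEq
    simpa using hp.2
  simp [entH, h1]

lemma mi2_eq_condMI (hp : IsPMF p) (X : Ω → α) (Y : Ω → β) :
    mi2 p X Y = condMI p X Y (fun _ : Ω => ()) := by
  simp only [condMI, condH, mi2]
  have e1 : entH p (fun ω => (X ω, ())) = entH p X :=
    entH_comp' (p := p) (e := fun x => (x, ())) (fun a b h => congrArg Prod.fst h) X _ (fun ω => rfl)
  have e2 : entH p (fun ω => (Y ω, ())) = entH p Y :=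
    entH_comp' (p := p) (e := fun y => (y, ())) (fun a b h => congrArg Prod.fst h) Y _ (fun ω => rfl)
  have e3 : entH p (fun ω => ((X ω, Y ω), ())) = entH p (fun ω => (X ω, Y ω)) :=
    entH_comp' (p := p) (e := fun q : α × β => (q, ())) (fun a b h => congrArg Prod.fst h) _ _ (fun ω => rfl)
  rw [e1, e2, e3, entH_unit hp]
  ring

lemma mi2_nonneg (hp : IsPMF p) (X : Ω → α) (Y : Ω → β) : 0 ≤ mi2 p X Y := by
  rw [mi2_eq_condMI hp]
  exact condMI_nonneg hp X Y _

lemma mi2_comp_left {α' : Type*} [Fintype α'] [DecidableEq α'] {e : α → α'}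
    (he : Function.Injective e) (X : Ω → α) (Y : Ω → β) :
    mi2 p (fun ω => e (X ω)) Y = mi2 p X Y := by
  simp only [mi2]
  have e1 : entH p (fun ω => e (X ω)) = entH p X := entH_comp he X
  have e2 : entH p (fun ω => (e (X ω), Y ω)) = entH p (fun ω => (X ω, Y ω)) :=
    entH_comp' (p := p) (e := fun q : α × β => (e q.1, q.2))
      (fun a b h => by simp only [Prod.ext_iff] at h ⊢; exact ⟨he h.1, h.2⟩) _ _ (fun ω => rfl)
  rw [e1, e2]

lemma condMI_comp₁ {α' : Type*} [Fintype α'] [DecidableEq α'] {e : α → α'}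
    (he : Function.Injective e) (X : Ω → α) (Y : Ω → β) (Z : Ω → γ) :
    condMI p (fun ω => e (X ω)) Y Z = condMI p X Y Z := by
  simp only [condMI, condH]
  have e1 : entH p (fun ω => (e (X ω), Z ω)) = entH p (fun ω => (X ω, Z ω)) :=
    entH_comp' (p := p) (e := fun q : α × γ => (e q.1, q.2))
      (fun a b h => by simp only [Prod.ext_iff] at h ⊢; exact ⟨he h.1, h.2⟩) _ _ (fun ω => rfl)
  have e2 : entH p (fun ω => ((e (X ω), Y ω), Z ω)) = entH p (fun ω => ((X ω, Y ω), Z ω)) :=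
    entH_comp' (p := p) (e := fun q : (α × β) × γ => ((e q.1.1, q.1.2), q.2))
      (fun a b h => by
        simp only [Prod.ext_iff] at h ⊢
        exact ⟨⟨he h.1.1, h.1.2⟩, h.2⟩) _ _ (fun ω => rfl)
  rw [e1, e2]

lemma condMI_comp₃ {γ' : Type*} [Fintype γ'] [DecidableEq γ'] {e : γ → γ'}
    (he : Function.Injective e) (X : Ω → α) (Y : Ω → β) (Z : Ω → γ) :
    condMI p X Y (fun ω => e (Z ω)) = condMI p X Y Z := by
  simp only [condMI, condH]
  have e1 : entH p (fun ω => (X ω, e (Z ω))) = entH p (fun ω => (X ω, Z ω)) :=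
    entH_comp' (p := p) (e := fun q : α × γ => (q.1, e q.2))
      (fun a b h => by simp only [Prod.ext_iff] at h ⊢; exact ⟨h.1, he h.2⟩) _ _ (fun ω => rfl)
  have e2 : entH p (fun ω => (Y ω, e (Z ω))) = entH p (fun ω => (Y ω, Z ω)) :=
    entH_comp' (p := p) (e := fun q : β × γ => (q.1, e q.2))
      (fun a b h => by simp only [Prod.ext_iff] at h ⊢; exact ⟨h.1, he h.2⟩) _ _ (fun ω => rfl)
  have e3 : entH p (fun ω => ((X ω, Y ω), e (Z ω))) = entH p (fun ω => ((X ω, Y ω), Z ω)) :=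
    entH_comp' (p := p) (e := fun q : (α × β) × γ => (q.1, e q.2))
      (fun a b h => by simp only [Prod.ext_iff] at h ⊢; exact ⟨⟨h.1.1, h.1.2⟩, he h.2⟩) _ _ (fun ω => rfl)
  have e4 : entH p (fun ω => e (Z ω)) = entH p Z := entH_comp he Z
  rw [e1, e2, e3, e4]

lemma condMI_le_mi2 (hp : IsPMF p) (A : Ω → α) (C : Ω → β) (B : Ω → γ) :
    condMI p A C B ≤ mi2 p (fun ω => (A ω, B ω)) C := by
  have hnn := mi2_nonneg hp B C
  have e1 : entH p (fun ω => ((A ω, B ω), C ω)) = entH p (fun ω => ((A ω, C ω), B ω)) :=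
    entH_comp' (p := p) (e := fun q : (α × β) × γ => ((q.1.1, q.2), q.1.2))
      (fun a b h => by simp only [Prod.ext_iff] at h ⊢; tauto)
      (fun ω => ((A ω, C ω), B ω)) _ (fun ω => rfl)
  have e2 : entH p (fun ω => (B ω, C ω)) = entH p (fun ω => (C ω, B ω)) :=
    entH_comp' (p := p) (e := fun q : β × γ => (q.2, q.1))
      (fun a b h => by simp only [Prod.ext_iff] at h ⊢; tauto) _ _ (fun ω => rfl)
  simp only [mi2, e2] at hnn ⊢
  simp only [condMI, condH]
  rw [e1]
  linarith

lemma mi2_chain {α' : Type*} [Fintype α'] [DecidableEq α'] (hp : IsPMF p)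
    (A : Ω → α) (A' : Ω → α') (C : Ω → β) :
    mi2 p (fun ω => (A ω, A' ω)) C = mi2 p A' C + condMI p A C A' := by
  rw [mi2_eq_condMI hp, mi2_eq_condMI hp, condMI_chain A A' C (fun _ => ())]
  congr 1
  exact condMI_comp₃ (e := fun a' : α' => (a', ())) (fun a b h => congrArg Prod.fst h) A C A'
end Struct

section Struct2
variable {Ω α β γ : Type*} [Fintype Ω] [Fintype α] [DecidableEq α] [Fintype β] [DecidableEq β]
  [Fintype γ] [DecidableEq γ] {p : Ω → ℝ}

lemma mi2_comp_left' {α' : Type*} [Fintype α'] [DecidableEq α'] {e : α → α'}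
    (he : Function.Injective e) (X : Ω → α) (Y : Ω → β) (G : Ω → α')
    (hG : ∀ ω, G ω = e (X ω)) : mi2 p G Y = mi2 p X Y := by
  rw [show G = fun ω => e (X ω) from funext hG]
  exact mi2_comp_left he X Y

lemma condMI_comp₁' {α' : Type*} [Fintype α'] [DecidableEq α'] {e : α → α'}
    (he : Function.Injective e) (X : Ω → α) (Y : Ω → β) (Z : Ω → γ) (G : Ω → α')
    (hG : ∀ ω, G ω = e (X ω)) : condMI p G Y Z = condMI p X Y Z := by
  rw [show G = fun ω => e (X ω) from funext hG]
  exact condMI_comp₁ he X Y Z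

end Struct2

theorem stmt15 {Ω YRt YSt X1t X2t X3t S1t V2t : Type*} [Fintype Ω]
    [Fintype YRt] [DecidableEq YRt] [Fintype YSt] [DecidableEq YSt]
    [Fintype X1t] [DecidableEq X1t] [Fintype X2t] [DecidableEq X2t]
    [Fintype X3t] [DecidableEq X3t] [Fintype S1t] [DecidableEq S1t]
    [Fintype V2t] [DecidableEq V2t]
    (p : Ω → ℝ) (hp : IsPMF p)
    (YR : Ω → YRt) (YS : Ω → YSt) (X1 : Ω → X1t) (X2 : Ω → X2t) (X3 : Ω → X3t)
    (S1 : Ω → S1t) (V2 : Ω → V2t)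
    (hmc1 : MarkovChain p YS (fun ω => (S1 ω, V2 ω, X1 ω, X2 ω)) YR)
    (hmc2 : MarkovChain p (fun ω => (S1 ω, V2 ω, X1 ω, X2 ω)) X3 YR)
    (hdet : condH p YS (fun ω => (X1 ω, X2 ω)) = 0) :
    condMI p (fun ω => (X1 ω, X3 ω)) (fun ω => (YR ω, YS ω))
        (fun ω => (S1 ω, V2 ω, X2 ω))
      ≤ condMI p X1 YS (fun ω => (S1 ω, V2 ω, X2 ω)) + mi2 p X3 YR := by
  set W : Ω → S1t × V2t × X2t := fun ω => (S1 ω, V2 ω, X2 ω) with hW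
  set A : Ω → X1t × X3t := fun ω => (X1 ω, X3 ω) with hA
  -- Step 1: chain rule
  have h1 : condMI p A (fun ω => (YR ω, YS ω)) W
      = condMI p A YS W + condMI p A YR (fun ω => (YS ω, W ω)) := by
    calc condMI p A (fun ω => (YR ω, YS ω)) W
        = condMI p (fun ω => (YR ω, YS ω)) A W := condMI_symm _ _ _
      _ = condMI p YS A W + condMI p YR A (fun ω => (YS ω, W ω)) := condMI_chain YR YS A W
      _ = condMI p A YS W + condMI p A YR (fun ω => (YS ω, W ω)) := by
          rw [condMI_symm YS A W, condMI_symm YR A (fun ω => (YS ω, W ω))]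
  -- Step 2: determinism kills X3 in the YS part
  have hz1 : condH p YS (fun ω => (A ω, W ω)) = 0 :=
    condH_eq_zero_of_det hp hdet
      (fun q : (X1t × X3t) × S1t × V2t × X2t => (q.1.1, q.2.2.2)) (fun ω => rfl)
  have hz2 : condH p YS (fun ω => (X1 ω, W ω)) = 0 :=
    condH_eq_zero_of_det hp hdet
      (fun q : X1t × S1t × V2t × X2t => (q.1, q.2.2.2)) (fun ω => rfl)
  have h2 : condMI p A YS W = condMI p X1 YS W := by
    rw [condMI_eq_condH_sub A YS W, condMI_eq_condH_sub X1 YS W, hz1, hz2]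
  -- Step 3: the YR part is at most I(X3;YR)
  have c1 : condMI p A YR (fun ω => (YS ω, W ω))
      ≤ mi2 p (fun ω => (A ω, (YS ω, W ω))) YR :=
    condMI_le_mi2 hp A YR (fun ω => (YS ω, W ω))
  have c2 : mi2 p (fun ω => (A ω, (YS ω, W ω))) YR
      = mi2 p (fun ω => ((X1 ω, (YS ω, W ω)), X3 ω)) YR :=
    mi2_comp_left'
      (e := fun q : (X1t × YSt × S1t × V2t × X2t) × X3t => ((q.1.1, q.2), q.1.2))
      (fun a b h => by simp only [Prod.ext_iff] at h ⊢; tauto)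
      (fun ω => ((X1 ω, (YS ω, W ω)), X3 ω)) YR _ (fun ω => rfl)
  have c3 : mi2 p (fun ω => ((X1 ω, (YS ω, W ω)), X3 ω)) YR
      = mi2 p X3 YR + condMI p (fun ω => (X1 ω, (YS ω, W ω))) YR X3 :=
    mi2_chain hp (fun ω => (X1 ω, (YS ω, W ω))) X3 YR
  have c4a : condMI p (fun ω => (X1 ω, (YS ω, W ω))) YR X3
      = condMI p (fun ω => (YS ω, (X1 ω, W ω))) YR X3 :=
    condMI_comp₁'
      (e := fun q : YSt × X1t × S1t × V2t × X2t => (q.2.1, (q.1, q.2.2)))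
      (fun a b h => by simp only [Prod.ext_iff] at h ⊢; tauto)
      (fun ω => (YS ω, (X1 ω, W ω))) YR X3 _ (fun ω => rfl)
  have c4b : condMI p (fun ω => (YS ω, (X1 ω, W ω))) YR X3
      = condMI p (fun ω => (X1 ω, W ω)) YR X3
        + condMI p YS YR (fun ω => ((X1 ω, W ω), X3 ω)) :=
    condMI_chain YS (fun ω => (X1 ω, W ω)) YR X3
  have c4c : condMI p (fun ω => (X1 ω, W ω)) YR X3 = 0 := by
    have hrec : condMI p (fun ω => (X1 ω, W ω)) YR X3
        = condMI p (fun ω => (S1 ω, V2 ω, X1 ω, X2 ω)) YR X3 :=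
      condMI_comp₁'
        (e := fun q : S1t × V2t × X1t × X2t => (q.2.2.1, (q.1, (q.2.1, q.2.2.2))))
        (fun a b h => by simp only [Prod.ext_iff] at h ⊢; tauto)
        (fun ω => (S1 ω, V2 ω, X1 ω, X2 ω)) YR X3 _ (fun ω => rfl)
    rw [hrec]
    exact markov_condMI hp.1 hmc2
  have c4d : condMI p YS YR (fun ω => ((X1 ω, W ω), X3 ω)) = 0 := by
    rw [condMI_symm, condMI_eq_condH_sub]
    have d1 : condH p YS (fun ω => ((X1 ω, W ω), X3 ω)) = 0 :=
      condH_eq_zero_of_det hp hdet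
        (fun q : (X1t × S1t × V2t × X2t) × X3t => (q.1.1, q.1.2.2.2)) (fun ω => rfl)
    have d2 : condH p YS (fun ω => (YR ω, ((X1 ω, W ω), X3 ω))) = 0 :=
      condH_eq_zero_of_det hp hdet
        (fun q : YRt × (X1t × S1t × V2t × X2t) × X3t => (q.2.1.1, q.2.1.2.2.2))
        (fun ω => rfl)
    rw [d1, d2]
    ring
  have h3 : condMI p A YR (fun ω => (YS ω, W ω)) ≤ mi2 p X3 YR := by
    rw [c2, c3, c4a, c4b, c4c, c4d] at c1
    linarith
  rw [h1, h2]
  linarith
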